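/- Let F be a finite subset of M, let θ, κ, and θ' be non-negative integers, let T be a subset of M such that the family (B(t,θ'))_{t∈T} covers M, and let S' be the finite set T ∩ F^{-(θ+κ)}. Then |F| ≤ |S'| · |B(θ')| + |∂_{θ+κ+θ'}⁻F|. -/

import Mathlib

open Filter Set

namespace GoE

variable {G M Q : Type*}

/-- A left homogeneous space `⟨M, G, ▷⟩` together with a coordinate system
`⟨m₀, (g_{m₀,m})_{m∈M}⟩`: a cell space with finite stabiliser `G₀` of `m₀`. -/
structure CellSpace (G M : Type*) [Group G] where
  act : G → M → M
  one_act : ∀ m : M, act 1 m = m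
  mul_act : ∀ (g h : G) (m : M), act (g * h) m = act g (act h m)
  transitive : ∀ m m' : M, ∃ g : G, act g m = m'
  m0 : M
  coord : M → G
  coord_act : ∀ m : M, act (coord m) m0 = m
  stab_finite : {g : G | act g m0 = m0}.Finite

variable [Group G]

namespace CellSpace

/-- Membership in the stabiliser `G₀` of `m₀`. -/
def stab (R : CellSpace G M) (g : G) : Prop := R.act g R.m0 = R.m0

/-- The induced right semi-action `m ↝ gG₀ = g_{m₀,m} g ▷ m₀`, on representatives. -/
def sAct (R : CellSpace G M) (m : M) (g : G) : M := R.act (R.coord m * g) R.m0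

/-- `m ↝ ι n` where `ι : M → G/G₀`, `n ↦ G_{m₀,n}` is the canonical identification. -/
def nAct (R : CellSpace G M) (m n : M) : M := R.act (R.coord m * R.coord n) R.m0

/-- `S ⊆ G` represents a finite symmetric right generating set of cosets
(`G₀ · S ⊆ S`, `S⁻¹ ⊆ S`, and `S` generates). -/
structure IsRightGenSet (R : CellSpace G M) (S : Set G) : Prop where
  finite : S.Finite
  saturated : ∀ s ∈ S, ∀ g₀ : G, R.stab g₀ → s * g₀ ∈ S
  stab_mul : ∀ g₀ : G, R.stab g₀ → ∀ s ∈ S, g₀ * s ∈ S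
  symm : ∀ s ∈ S, s⁻¹ ∈ S
  generates : ∀ m : M, ∃ (k : ℕ) (f : ℕ → M), f 0 = R.m0 ∧ f k = m ∧
    ∀ i < k, ∃ s ∈ S, f (i + 1) = R.sAct (f i) s

/-- There is an `S`-path of length `n` from `m` to `m'` in the `S`-Cayley graph. -/
def Chain (R : CellSpace G M) (S : Set G) (m m' : M) (n : ℕ) : Prop :=
  ∃ f : ℕ → M, f 0 = m ∧ f n = m' ∧ ∀ i < n, ∃ s ∈ S, f (i + 1) = R.sAct (f i) s

/-- The `S`-metric `d`. -/
noncomputable def dist (R : CellSpace G M) (S : Set G) (m m' : M) : ℕ :=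
  sInf {n : ℕ | R.Chain S m m' n}

/-- The ball `B(m, ρ)` of radius `ρ` centred at `m`. -/
noncomputable def ball (R : CellSpace G M) (S : Set G) (m : M) (ρ : ℕ) : Set M :=
  {m' : M | R.dist S m m' ≤ ρ}

/-- The `θ`-interior `A^{-θ}` of `A`. -/
noncomputable def inter (R : CellSpace G M) (S : Set G) (A : Set M) (θ : ℕ) : Set M :=
  {m ∈ A | R.ball S m θ ⊆ A}

/-- The `θ`-closure `A^{+θ}` of `A`. -/
noncomputable def clos (R : CellSpace G M) (S : Set G) (A : Set M) (θ : ℕ) : Set M :=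
  {m : M | (R.ball S m θ ∩ A).Nonempty}

/-- The external `θ`-boundary `∂θ⁺A = A^{+θ} ∖ A`. -/
noncomputable def extB (R : CellSpace G M) (S : Set G) (A : Set M) (θ : ℕ) : Set M :=
  R.clos S A θ \ A

/-- The internal `θ`-boundary `∂θ⁻A = A ∖ A^{-θ}`. -/
noncomputable def intB (R : CellSpace G M) (S : Set G) (A : Set M) (θ : ℕ) : Set M :=
  A \ R.inter S A θ

/-- The `θ`-boundary `∂θA = A^{+θ} ∖ A^{-θ}`. -/
noncomputable def bdry (R : CellSpace G M) (S : Set G) (A : Set M) (θ : ℕ) : Set M :=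
  R.clos S A θ \ R.inter S A θ

end CellSpace

/-- The set `X_A` of restrictions to `A` of the elements of `X`. -/
def restr (A : Set M) (X : Set (M → Q)) : Set (A → Q) :=
  (fun x : M → Q => A.restrict x) '' X

/-- The pattern `p` (with domain `A`) semi-occurs in the configuration `c`:
there is `h ∈ H` with `h ⊛ p = c↾_{h ▷ dom p}`. -/
def SemiOccurs (R : CellSpace G M) (H : Subgroup G) {A : Set M} (p : A → Q)
    (c : M → Q) : Prop :=
  ∃ h ∈ H, ∀ a : A, c (R.act h ↑a) = p a

/-- The pattern `p` (with domain `A`) occurs at `t` in the configuration `c`: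
`t ⊛' p = c↾_{t ↝ A}`. -/
def OccursAt (R : CellSpace G M) {A : Set M} (p : A → Q) (t : M) (c : M → Q) : Prop :=
  ∀ a : A, c (R.nAct t ↑a) = p a

/-- The pattern `p` is allowed in `X`: it semi-occurs in some point of `X`. -/
def Allowed (R : CellSpace G M) (H : Subgroup G) (X : Set (M → Q)) {A : Set M}
    (p : A → Q) : Prop :=
  ∃ x ∈ X, SemiOccurs R H p x

/-- The set `⟨𝔉⟩` generated by a set `𝔉` of forbidden patterns. -/
def Generated (R : CellSpace G M) (H : Subgroup G) (𝔉 : Set (Σ A : Set M, A → Q)) :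
    Set (M → Q) :=
  {c : M → Q | ∀ f ∈ 𝔉, ¬ SemiOccurs R H f.2 c}

/-- `X` is a subshift of `Q^M`: it is generated by a set of blocks. -/
def IsSubshift (R : CellSpace G M) (H : Subgroup G) (X : Set (M → Q)) : Prop :=
  ∃ 𝔉 : Set (Σ A : Set M, A → Q), (∀ f ∈ 𝔉, f.1.Finite) ∧ X = Generated R H 𝔉

/-- `X` is a subshift of finite type: it is generated by a finite set of blocks. -/
def IsSubshiftFT (R : CellSpace G M) (H : Subgroup G) (X : Set (M → Q)) : Prop :=
  ∃ 𝔉 : Set (Σ A : Set M, A → Q), 𝔉.Finite ∧ (∀ f ∈ 𝔉, f.1.Finite) ∧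
    X = Generated R H 𝔉

/-- `X` is a `κ`-step subshift: it is generated by a set of `B(κ)`-blocks. -/
def IsStep (R : CellSpace G M) (S : Set G) (H : Subgroup G) (X : Set (M → Q))
    (κ : ℕ) : Prop :=
  ∃ 𝔉 : Set (Σ A : Set M, A → Q), (∀ f ∈ 𝔉, f.1 = R.ball S R.m0 κ) ∧
    X = Generated R H 𝔉

/-- `X` is `κ`-strongly irreducible. -/
def IsStronglyIrr (R : CellSpace G M) (S : Set G) (H : Subgroup G)
    (X : Set (M → Q)) (κ : ℕ) : Prop :=
  ∀ (A B : Set M), A.Finite → B.Finite → ∀ (p : A → Q) (p' : B → Q),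
    Allowed R H X p → Allowed R H X p' →
    (∀ a ∈ A, ∀ b ∈ B, κ + 1 ≤ R.dist S a b) →
    ∃ x ∈ X, A.restrict x = p ∧ B.restrict x = p'

/-- `X` has `ρ`-bounded propagation. -/
def HasBoundedProp (R : CellSpace G M) (S : Set G) (X : Set (M → Q)) (ρ : ℕ) : Prop :=
  ∀ F : Set M, F.Finite → ∀ p : F → Q,
    (∀ f ∈ F, ∃ x ∈ X, ∀ (m : M) (hm : m ∈ R.ball S f ρ ∩ F), p ⟨m, hm.2⟩ = x m) →
    ∃ x ∈ X, F.restrict x = p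

/-- `Δ` is a `κ`-local map from `X` to `Y`. -/
def IsLocalMap (R : CellSpace G M) (S : Set G) (H : Subgroup G)
    (X Y : Set (M → Q)) (Δ : (M → Q) → (M → Q)) (κ : ℕ) : Prop :=
  Set.MapsTo Δ X Y ∧
  ∃ N : Set M, N ⊆ R.ball S R.m0 κ ∧
    (∀ g₀ : G, R.stab g₀ → ∀ n ∈ N, R.act g₀ n ∈ N) ∧
    ∃ δ : (N → Q) → Q,
      (∀ h₀ ∈ H, R.stab h₀ →
        ∀ ℓ ∈ restr N X, ∀ ℓ' : N → Q,
          (∀ (n : M) (hn : n ∈ N) (hn' : R.act h₀⁻¹ n ∈ N),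
            ℓ' ⟨n, hn⟩ = ℓ ⟨R.act h₀⁻¹ n, hn'⟩) →
          δ ℓ' = δ ℓ) ∧
      ∀ x ∈ X, ∀ m : M, Δ x m = δ (fun n : N => x (R.nAct m ↑n))

/-- `Δ` is pre-injective on `X`. -/
def PreInjective (X : Set (M → Q)) (Δ : (M → Q) → (M → Q)) : Prop :=
  ∀ x ∈ X, ∀ x' ∈ X, Δ x = Δ x' → {m : M | x m ≠ x' m}.Finite → x = x'

/-- The cell space `R` is right amenable: there is a finitely additive probability
measure on the power set of `M` that is semi-invariant under the right semi-action. -/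
def RightAmenable (R : CellSpace G M) : Prop :=
  ∃ μ : Set M → ℝ, (∀ A : Set M, 0 ≤ μ A) ∧ μ Set.univ = 1 ∧
    (∀ A B : Set M, Disjoint A B → μ (A ∪ B) = μ A + μ B) ∧
    ∀ (g : G) (A : Set M), Set.InjOn (fun m => R.sAct m g) A →
      μ ((fun m => R.sAct m g) '' A) = μ A

/-- `F` is a right Følner net in `R` (indexed by the directed set `I`). -/
def IsFolnerNet (R : CellSpace G M) (S : Set G) {I : Type*} [Preorder I]
    (F : I → Set M) : Prop :=
  (∀ i, (F i).Nonempty) ∧ (∀ i, (F i).Finite) ∧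
  ∀ ρ : ℕ, Tendsto (fun i => ((R.bdry S (F i) ρ).ncard : ℝ) / ((F i).ncard : ℝ))
    atTop (nhds 0)

/-- The entropy of `X ⊆ Q^M` with respect to the net `F`:
`limsup_i log|X_{F_i}| / |F_i|`. -/
noncomputable def entropy (R : CellSpace G M) (S : Set G) {I : Type*} [Preorder I]
    (F : I → Set M) (X : Set (M → Q)) : ℝ :=
  limsup (fun i => Real.log ((restr (F i) X).ncard : ℝ) / ((F i).ncard : ℝ)) atTop

/-- `T` is a `⟨θ, κ, θ'⟩`-tiling of `R`. -/
def IsTiling (R : CellSpace G M) (S : Set G) (θ κ θ' : ℕ) (T : Set M) : Prop :=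
  (∀ t ∈ T, ∀ t' ∈ T, t ≠ t' →
    ∀ a ∈ R.ball S t θ, ∀ b ∈ R.ball S t' θ, κ + 1 ≤ R.dist S a b) ∧
  ∀ m : M, ∃ t ∈ T, m ∈ R.ball S t θ'

/-- The action `h ⊛ c` of `h ∈ G` on configurations: `(h ⊛ c)(m) = c(h⁻¹ ▷ m)`. -/
def shiftAct (R : CellSpace G M) (h : G) (c : M → Q) : M → Q :=
  fun m => c (R.act h⁻¹ m)


namespace CellSpace
variable (R : CellSpace G M) (S : Set G)

lemma act_inv_act (g : G) (m : M) : R.act g⁻¹ (R.act g m) = m := by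
  rw [← R.mul_act, inv_mul_cancel, R.one_act]

lemma act_act_inv (g : G) (m : M) : R.act g (R.act g⁻¹ m) = m := by
  rw [← R.mul_act, mul_inv_cancel, R.one_act]

lemma act_injective (g : G) : Function.Injective (R.act g) :=
  Function.LeftInverse.injective (g := R.act g⁻¹) (R.act_inv_act g)

lemma chain_self (m : M) : R.Chain S m m 0 :=
  ⟨fun _ => m, rfl, rfl, fun i hi => absurd hi (by omega)⟩

lemma coord_inv_act (m : M) : R.act (R.coord m)⁻¹ m = R.m0 :=
  R.act_injective (R.coord m) (by rw [R.act_act_inv, R.coord_act])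

/-- reversal of a single step -/
lemma sAct_rev (hS : R.IsRightGenSet S) {s : G} (hs : s ∈ S) (m : M) :
    ∃ s' ∈ S, m = R.sAct (R.sAct m s) s' := by
  set m' := R.sAct m s with hm'
  have hstab : R.stab ((R.coord m')⁻¹ * (R.coord m * s)) := by
    show R.act _ R.m0 = R.m0
    rw [R.mul_act]
    exact R.coord_inv_act m' 
  refine ⟨(R.coord m')⁻¹ * (R.coord m * s) * s⁻¹,
    hS.stab_mul _ hstab s⁻¹ (hS.symm s hs), ?_⟩
  show m = R.act (R.coord m' * ((R.coord m')⁻¹ * (R.coord m * s) * s⁻¹)) R.m0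
  have : R.coord m' * ((R.coord m')⁻¹ * (R.coord m * s) * s⁻¹) = R.coord m := by group
  rw [this, R.coord_act]

/-- a single step transported by the left action -/
lemma act_sAct (hS : R.IsRightGenSet S) {s : G} (hs : s ∈ S) (g : G) (m : M) :
    ∃ s' ∈ S, R.act g (R.sAct m s) = R.sAct (R.act g m) s' := by
  have hstab : R.stab ((R.coord (R.act g m))⁻¹ * g * R.coord m) := by
    show R.act _ R.m0 = R.m0
    rw [mul_assoc, R.mul_act, R.mul_act, R.coord_act]
    exact R.coord_inv_act (R.act g m)
  refine ⟨(R.coord (R.act g m))⁻¹ * g * R.coord m * s,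
    hS.stab_mul _ hstab s hs, ?_⟩
  show R.act g (R.act (R.coord m * s) R.m0) =
    R.act (R.coord (R.act g m) * ((R.coord (R.act g m))⁻¹ * g * R.coord m * s)) R.m0
  rw [← R.mul_act]
  congr 1
  group

lemma chain_trans {m m' m'' : M} {n n' : ℕ} (h : R.Chain S m m' n)
    (h' : R.Chain S m' m'' n') : R.Chain S m m'' (n + n') := by
  obtain ⟨f, hf0, hfn, hf⟩ := h
  obtain ⟨f', hf0', hfn', hf'⟩ := h'
  refine ⟨fun i => if i ≤ n then f i else f' (i - n), by simp [hf0], ?_, ?_⟩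
  · rcases Nat.eq_zero_or_pos n' with h0 | h0
    · subst h0
      have hm : m' = m'' := by rw [← hf0', hfn']
      simp [hfn, hm]
    · have hle : ¬ (n + n' ≤ n) := by omega
      simp [hle, hfn']
  · intro i hi
    rcases lt_or_ge i n with hin | hin
    · obtain ⟨s, hs, hstep⟩ := hf i hin
      refine ⟨s, hs, ?_⟩
      show (if i + 1 ≤ n then f (i + 1) else f' (i + 1 - n)) =
        R.sAct (if i ≤ n then f i else f' (i - n)) s
      rw [if_pos (show i + 1 ≤ n from hin), if_pos (Nat.le_of_lt hin), hstep]
    · obtain ⟨s, hs, hstep⟩ := hf' (i - n) (by omega)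
      have h1 : ¬ (i + 1 ≤ n) := by omega
      have h2 : i + 1 - n = (i - n) + 1 := by omega
      refine ⟨s, hs, ?_⟩
      show (if i + 1 ≤ n then f (i + 1) else f' (i + 1 - n)) =
        R.sAct (if i ≤ n then f i else f' (i - n)) s
      rw [if_neg h1, h2, hstep]
      congr 1
      rcases Nat.eq_or_lt_of_le hin with heq | hlt
      · rw [if_pos (le_of_eq heq.symm), ← heq, hfn, ← hf0', Nat.sub_self]
      · rw [if_neg (by omega)]

lemma chain_symm (hS : R.IsRightGenSet S) {m m' : M} {n : ℕ}
    (h : R.Chain S m m' n) : R.Chain S m' m n := by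
  obtain ⟨f, hf0, hfn, hf⟩ := h
  refine ⟨fun i => f (n - i), by simp [hfn], by simp [hf0], ?_⟩
  intro i hi
  obtain ⟨s, hs, hstep⟩ := hf (n - i - 1) (by omega)
  obtain ⟨s', hs', hrev⟩ := R.sAct_rev S hS hs (f (n - i - 1))
  refine ⟨s', hs', ?_⟩
  have h1 : n - (i + 1) = n - i - 1 := by omega
  have h2 : n - i - 1 + 1 = n - i := by omega
  show f (n - (i + 1)) = R.sAct (f (n - i)) s'
  rw [h1, hrev, ← hstep, h2]

lemma act_chain (hS : R.IsRightGenSet S) {m m' : M} {n : ℕ} (g : G)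
    (h : R.Chain S m m' n) : R.Chain S (R.act g m) (R.act g m') n := by
  obtain ⟨f, hf0, hfn, hf⟩ := h
  refine ⟨fun i => R.act g (f i), by simp only [hf0], by simp only [hfn], ?_⟩
  intro i hi
  obtain ⟨s, hs, hstep⟩ := hf i hi
  obtain ⟨s', hs', hact⟩ := R.act_sAct S hS hs g (f i)
  refine ⟨s', hs', ?_⟩
  show R.act g (f (i + 1)) = R.sAct (R.act g (f i)) s'
  rw [hstep, hact]

lemma chain_nonempty (hS : R.IsRightGenSet S) (m m' : M) :
    ∃ n, R.Chain S m m' n := by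
  have h0 : ∀ x : M, ∃ n, R.Chain S R.m0 x n := by
    intro x
    obtain ⟨k, f, hf⟩ := hS.generates x
    exact ⟨k, f, hf⟩
  obtain ⟨n₁, h₁⟩ := h0 m
  obtain ⟨n₂, h₂⟩ := h0 m'
  exact ⟨n₁ + n₂, R.chain_trans S (R.chain_symm S hS h₁) h₂⟩

lemma chain_dist (hS : R.IsRightGenSet S) (m m' : M) :
    R.Chain S m m' (R.dist S m m') :=
  Nat.sInf_mem (R.chain_nonempty S hS m m')

lemma dist_le_of_chain {m m' : M} {n : ℕ} (h : R.Chain S m m' n) :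
    R.dist S m m' ≤ n := Nat.sInf_le h

lemma dist_self (m : M) : R.dist S m m = 0 :=
  Nat.le_zero.mp (R.dist_le_of_chain S (R.chain_self S m))

lemma dist_symm (hS : R.IsRightGenSet S) (m m' : M) :
    R.dist S m m' = R.dist S m' m := by
  have key : ∀ a b : M, R.dist S a b ≤ R.dist S b a := fun a b =>
    R.dist_le_of_chain S (R.chain_symm S hS (R.chain_dist S hS b a))
  exact le_antisymm (key m m') (key m' m)

lemma dist_triangle (hS : R.IsRightGenSet S) (m m' m'' : M) :
    R.dist S m m'' ≤ R.dist S m m' + R.dist S m' m'' :=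
  R.dist_le_of_chain S (R.chain_trans S (R.chain_dist S hS m m') (R.chain_dist S hS m' m''))

lemma dist_act (hS : R.IsRightGenSet S) (g : G) (m m' : M) :
    R.dist S (R.act g m) (R.act g m') = R.dist S m m' := by
  have key : ∀ (g : G) (a b : M),
      R.dist S (R.act g a) (R.act g b) ≤ R.dist S a b := fun g a b =>
    R.dist_le_of_chain S (R.act_chain S hS g (R.chain_dist S hS a b))
  refine le_antisymm (key g m m') ?_
  have := key g⁻¹ (R.act g m) (R.act g m')
  rwa [R.act_inv_act, R.act_inv_act] at this

lemma ball_act (hS : R.IsRightGenSet S) (g : G) (m : M) (ρ : ℕ) :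
    R.ball S (R.act g m) ρ = R.act g '' R.ball S m ρ := by
  ext x
  constructor
  · intro hx
    refine ⟨R.act g⁻¹ x, ?_, R.act_act_inv g x⟩
    have : R.dist S (R.act g m) (R.act g (R.act g⁻¹ x)) ≤ ρ := by
      rwa [R.act_act_inv]
    rwa [R.dist_act S hS] at this
  · rintro ⟨y, hy, rfl⟩
    show R.dist S _ _ ≤ ρ
    rwa [R.dist_act S hS]

lemma ncard_ball (hS : R.IsRightGenSet S) (t : M) (ρ : ℕ) :
    (R.ball S t ρ).ncard = (R.ball S R.m0 ρ).ncard := by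
  conv_lhs => rw [← R.coord_act t]
  rw [R.ball_act S hS, Set.ncard_image_of_injective _ (R.act_injective _)]

lemma ball_finite (hS : R.IsRightGenSet S) (m : M) (ρ : ℕ) :
    (R.ball S m ρ).Finite := by
  induction ρ with
  | zero =>
    refine Set.Finite.subset (Set.finite_singleton m) ?_
    intro x hx
    have h0 : R.dist S m x = 0 := Nat.le_zero.mp hx
    have hc := R.chain_dist S hS m x
    rw [h0] at hc
    obtain ⟨f, hf0, hfn, -⟩ := hc
    simp [← hf0, hfn]
  | succ ρ ih =>
    refine Set.Finite.subset
      (Set.Finite.union ih (Set.Finite.biUnion hS.finite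
        (fun s _ => ih.image (fun x => R.sAct x s)))) ?_
    intro x hx
    have hc := R.chain_dist S hS m x
    rcases le_or_gt (R.dist S m x) ρ with h | h
    · exact Or.inl h
    · have hx' : R.dist S m x ≤ ρ + 1 := hx
      have hn : R.dist S m x = ρ + 1 := by omega
      rw [hn] at hc
      obtain ⟨f, hf0, hfn, hf⟩ := hc
      obtain ⟨s, hs, hstep⟩ := hf ρ (by omega)
      refine Or.inr (Set.mem_biUnion hs ⟨f ρ, ?_, ?_⟩)
      · exact R.dist_le_of_chain S ⟨f, hf0, rfl, fun i hi => hf i (by omega)⟩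
      · show R.sAct (f ρ) s = x
        rw [← hstep, hfn]




lemma ncard_biUnion_le {α : Type*} (k : ℕ) (f : α → Set M) :
    ∀ s : Set α, s.Finite → (∀ t ∈ s, (f t).Finite ∧ (f t).ncard ≤ k) →
      (⋃ t ∈ s, f t).ncard ≤ s.ncard * k := by
  intro s hs
  refine Set.Finite.induction_on
    (motive := fun s _ => (∀ t ∈ s, (f t).Finite ∧ (f t).ncard ≤ k) →
      (⋃ t ∈ s, f t).ncard ≤ s.ncard * k) s hs (by simp) ?_
  intro a s ha hsfin ih h
  rw [Set.biUnion_insert]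
  calc (f a ∪ ⋃ t ∈ s, f t).ncard ≤ (f a).ncard + (⋃ t ∈ s, f t).ncard :=
      Set.ncard_union_le _ _
    _ ≤ k + s.ncard * k :=
      add_le_add (h a (Set.mem_insert a s)).2
        (ih fun t ht => h t (Set.mem_insert_of_mem a ht))
    _ = (insert a s).ncard * k := by
      rw [Set.ncard_insert_of_notMem ha hsfin]; ring

end CellSpace

theorem stmt10
    (R : CellSpace G M) (S : Set G) (hS : R.IsRightGenSet S)
    (F : Set M) (hF : F.Finite) (θ κ θ' : ℕ)
    (T : Set M) (hT : ∀ m : M, ∃ t ∈ T, m ∈ R.ball S t θ') :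
    F.ncard ≤ (T ∩ R.inter S F (θ + κ)).ncard * (R.ball S R.m0 θ').ncard +
      (R.intB S F (θ + κ + θ')).ncard := by
  classical
  set S' := T ∩ R.inter S F (θ + κ) with hS'def
  have hS'fin : S'.Finite := hF.subset (fun t ht => ht.2.1)
  have hcover : F ⊆ (⋃ t ∈ S', R.ball S t θ') ∪ R.intB S F (θ + κ + θ') := by
    intro m hm
    obtain ⟨t, htT, htm⟩ := hT m
    by_cases ht : t ∈ R.inter S F (θ + κ)
    · exact Or.inl (Set.mem_biUnion (⟨htT, ht⟩ : t ∈ S') htm)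
    · refine Or.inr ⟨hm, fun hmem => ht ?_⟩
      obtain ⟨-, hmb⟩ := hmem
      have hdist : R.dist S m t ≤ θ' := by
        rw [R.dist_symm S hS]; exact htm
      refine ⟨hmb (show R.dist S m t ≤ θ + κ + θ' by omega), ?_⟩
      intro y hy
      refine hmb (show R.dist S m y ≤ θ + κ + θ' from ?_)
      calc R.dist S m y ≤ R.dist S m t + R.dist S t y := R.dist_triangle S hS m t y
        _ ≤ θ' + (θ + κ) := add_le_add hdist hy
        _ ≤ θ + κ + θ' := by omega
  have hUfin : (⋃ t ∈ S', R.ball S t θ').Finite :=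
    Set.Finite.biUnion hS'fin (fun t _ => R.ball_finite S hS t θ')
  have hIfin : (R.intB S F (θ + κ + θ')).Finite := hF.subset (fun x hx => hx.1)
  have hU : (⋃ t ∈ S', R.ball S t θ').ncard ≤ S'.ncard * (R.ball S R.m0 θ').ncard :=
    CellSpace.ncard_biUnion_le _ _ S' hS'fin
      (fun t _ => ⟨R.ball_finite S hS t θ', (R.ncard_ball S hS t θ').le⟩)
  calc F.ncard ≤ ((⋃ t ∈ S', R.ball S t θ') ∪ R.intB S F (θ + κ + θ')).ncard :=
      Set.ncard_le_ncard hcover (hUfin.union hIfin)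
    _ ≤ (⋃ t ∈ S', R.ball S t θ').ncard + (R.intB S F (θ + κ + θ')).ncard :=
      Set.ncard_union_le _ _
    _ ≤ S'.ncard * (R.ball S R.m0 θ').ncard + (R.intB S F (θ + κ + θ')).ncard :=
      add_le_add_left hU _

end GoE
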